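/- For every real α ≥ 2 and every real x > 0, (α/(α−1))·(x+1) ≤ ((x+2)^α − x^α)/((x+2)^{α−1} − x^{α−1}). -/

import Mathlib

theorem hadamard_step (α : ℝ) (hα : 2 ≤ α) (x : ℝ) (hx : 0 < x) :
    (α / (α - 1)) * (x + 1) ≤ ((x + 2) ^ α - x ^ α) / ((x + 2) ^ (α - 1) - x ^ (α - 1)) := by
  have hx2 : (0:ℝ) < x + 2 := by linarith
  have hα1 : (0:ℝ) < α - 1 := by linarith
  have hα0 : (0:ℝ) < α := by linarith
  set m : ℝ := x + 1 with hm
  set g : ℝ → ℝ := fun t => α * (α - 1) * (t - m) * t ^ (α - 2) with hg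
  -- continuity of g on Ici x
  have hc : ContinuousOn g (Set.Ici x) := by
    apply ContinuousOn.mul
    · fun_prop
    · intro t ht
      have ht0 : t ≠ 0 := (lt_of_lt_of_le hx ht).ne'
      exact (Real.continuousAt_rpow_const t (α - 2) (Or.inl ht0)).continuousWithinAt
  -- derivative
  have hd : ∀ t ∈ Set.uIcc x (x + 2),
      HasDerivAt (fun t => (α - 1) * t ^ α - α * m * t ^ (α - 1)) (g t) t := by
    intro t ht
    rw [Set.uIcc_of_le (by linarith)] at ht
    have ht0 : 0 < t := lt_of_lt_of_le hx ht.1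
    have h1 := (Real.hasDerivAt_rpow_const (p := α) (Or.inl ht0.ne')).const_mul (α - 1)
    have h2 := (Real.hasDerivAt_rpow_const (p := α - 1) (Or.inl ht0.ne')).const_mul (α * m)
    have h3 := h1.sub h2
    convert h3 using 1
    case e'_4 => rfl
    case e'_5 => rfl
    case e'_8 => rfl
    have e1 : α - 1 - 1 = α - 2 := by ring
    have e2 : t ^ (α - 1) = t ^ (α - 2) * t := by
      rw [show α - 1 = α - 2 + 1 by ring, Real.rpow_add_one ht0.ne']
    rw [e1, e2]
    simp only [hg]
    ring
  have hsub1 : Set.uIcc x (x + 2) ⊆ Set.Ici x := by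
    rw [Set.uIcc_of_le (by linarith)]
    exact Set.Icc_subset_Ici_self
  have hint : IntervalIntegrable g MeasureTheory.volume x (x + 2) :=
    (hc.mono hsub1).intervalIntegrable
  have hFTC := intervalIntegral.integral_eq_sub_of_hasDerivAt hd hint
  -- split the integral and reflect
  have hint1 : IntervalIntegrable g MeasureTheory.volume x m := by
    refine (hc.mono ?_).intervalIntegrable
    rw [Set.uIcc_of_le (by rw [hm]; linarith)]
    exact Set.Icc_subset_Ici_self
  have hint2 : IntervalIntegrable g MeasureTheory.volume m (x + 2) := by
    refine (hc.mono ?_).intervalIntegrable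
    rw [Set.uIcc_of_le (by rw [hm]; linarith)]
    intro t ht
    exact Set.mem_Ici.2 (le_trans (by rw [hm]; linarith) ht.1)
  have hsplit : (∫ t in x..(x + 2), g t)
      = (∫ t in x..m, g t) + ∫ t in m..(x + 2), g t :=
    (intervalIntegral.integral_add_adjacent_intervals hint1 hint2).symm
  have hrefl : (∫ s in m..(x + 2), g (2 * m - s)) = ∫ t in x..m, g t := by
    have h := intervalIntegral.integral_comp_sub_left (a := m) (b := x + 2) g (2 * m)
    rw [show 2 * m - (x + 2) = x by rw [hm]; ring, show 2 * m - m = m by ring] at h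
    exact h
  have hint3 : IntervalIntegrable (fun s => g (2 * m - s)) MeasureTheory.volume m (x + 2) := by
    refine (hc.comp (by fun_prop : Continuous fun s : ℝ => 2 * m - s).continuousOn ?_).intervalIntegrable
    intro s hs
    rw [Set.uIcc_of_le (by rw [hm]; linarith)] at hs
    simp only [Set.mem_Ici]
    have h2 := hs.2
    linarith [hm.le, hm.ge]
  have hnonneg : 0 ≤ ∫ s in m..(x + 2), (g (2 * m - s) + g s) := by
    apply intervalIntegral.integral_nonneg (by rw [hm]; linarith)
    intro s hs
    have hs1 : m ≤ s := hs.1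
    have hs2 : s ≤ x + 2 := hs.2
    have hpos : 0 < 2 * m - s := by linarith [hm.le, hm.ge]
    have hle : 2 * m - s ≤ s := by linarith [hm.le, hm.ge]
    have hr : (2 * m - s) ^ (α - 2) ≤ s ^ (α - 2) :=
      Real.rpow_le_rpow hpos.le hle (by linarith)
    have key : 0 ≤ α * (α - 1) * (s - m) * (s ^ (α - 2) - (2 * m - s) ^ (α - 2)) := by
      apply mul_nonneg
      · apply mul_nonneg (mul_nonneg hα0.le hα1.le)
        linarith
      · linarith
    have expand : g (2 * m - s) + g s
        = α * (α - 1) * (s - m) * (s ^ (α - 2) - (2 * m - s) ^ (α - 2)) := by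
      simp only [hg]
      ring
    linarith [expand ▸ key]
  have hsum : (∫ s in m..(x + 2), (g (2 * m - s) + g s))
      = (∫ s in m..(x + 2), g (2 * m - s)) + ∫ s in m..(x + 2), g s :=
    intervalIntegral.integral_add hint3 hint2
  have htot : 0 ≤ ∫ t in x..(x + 2), g t := by
    rw [hsplit, ← hrefl]
    rw [hsum] at hnonneg
    linarith
  rw [hFTC] at htot
  -- conclude
  have hD : 0 < (x + 2) ^ (α - 1) - x ^ (α - 1) := by
    have := Real.rpow_lt_rpow hx.le (by linarith : x < x + 2) hα1
    linarith
  rw [le_div_iff₀ hD, div_mul_eq_mul_div, div_mul_eq_mul_div, div_le_iff₀ hα1]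
  nlinarith [htot]
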